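/- Let B ≥ 2, μ > 0, and thresholds τ_1 ≥ τ_2 ≥ ... ≥ τ_B > 0 with τ_1 < ∞. Consider the Markov chain on states {0,1,...,B−1} with transition probabilities P(j → B−1) = Pr(Y_{B−j} ≤ τ_{B−1}) and P(j → i) = Pr(Y_{1+i−j} ≤ τ_i) − Pr(Y_{2+i−j} ≤ τ_{i+1}) for i < B−1, where Y_m is Erlang(m, μ) for m ≥ 1 and Y_m = 0 a.s. for m ≤ 0. Then for every pair of states j, i, state i is reachable from j in at most B−1 steps with positive probability; hence the chain is irreducible (and, being finite, ergodic). -/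

import Mathlib

/-- CDF of the Erlang distribution with rate `μ` and integer shape `m`, with the
convention `Y_m = 0` a.s. (so CDF ≡ 1 on `[0,∞)`) for `m ≤ 0`. -/
noncomputable def erlangCDF (μ : ℝ) (m : ℤ) (x : ℝ) : ℝ :=
  if m ≤ 0 then 1
  else 1 - ∑ v ∈ Finset.range m.toNat,
    Real.exp (-μ * x) * (μ * x) ^ v / (Nat.factorial v : ℝ)


open Finset Real

noncomputable def Qsum (μ : ℝ) (m : ℕ) (x : ℝ) : ℝ :=
  ∑ v ∈ Finset.range m, Real.exp (-μ * x) * (μ * x) ^ v / (Nat.factorial v : ℝ)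

lemma Qsum_eq (μ : ℝ) (m : ℕ) (x : ℝ) :
    Qsum μ m x = Real.exp (-(μ * x)) * ∑ v ∈ Finset.range m, (μ * x) ^ v / (Nat.factorial v : ℝ) := by
  rw [Finset.mul_sum, Qsum]
  refine Finset.sum_congr rfl fun v _ => ?_
  rw [neg_mul]
  ring

lemma Qsum_nonneg {μ x : ℝ} (h : 0 ≤ μ * x) (m : ℕ) : 0 ≤ Qsum μ m x := by
  rw [Qsum_eq]
  apply mul_nonneg (Real.exp_pos _).le
  apply Finset.sum_nonneg
  intro v _
  positivity

lemma Qsum_le_one {μ x : ℝ} (h : 0 ≤ μ * x) (m : ℕ) : Qsum μ m x ≤ 1 := by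
  rw [Qsum_eq]
  calc Real.exp (-(μ * x)) * ∑ v ∈ Finset.range m, (μ * x) ^ v / (Nat.factorial v : ℝ)
      ≤ Real.exp (-(μ * x)) * Real.exp (μ * x) :=
        mul_le_mul_of_nonneg_left (Real.sum_le_exp_of_nonneg h m) (Real.exp_pos _).le
    _ = 1 := by rw [← Real.exp_add]; simp

lemma Qsum_lt_one {μ x : ℝ} (h : 0 < μ * x) (m : ℕ) : Qsum μ m x < 1 := by
  rw [Qsum_eq]
  have hs : ∑ v ∈ Finset.range m, (μ * x) ^ v / (Nat.factorial v : ℝ) < Real.exp (μ * x) := by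
    have h1 : ∑ v ∈ Finset.range (m+1), (μ * x) ^ v / (Nat.factorial v : ℝ) ≤ Real.exp (μ * x) :=
      Real.sum_le_exp_of_nonneg h.le (m+1)
    rw [Finset.sum_range_succ] at h1
    have : 0 < (μ * x) ^ m / (Nat.factorial m : ℝ) := by positivity
    linarith
  calc Real.exp (-(μ * x)) * ∑ v ∈ Finset.range m, (μ * x) ^ v / (Nat.factorial v : ℝ)
      < Real.exp (-(μ * x)) * Real.exp (μ * x) :=
        mul_lt_mul_of_pos_left hs (Real.exp_pos _)
    _ = 1 := by rw [← Real.exp_add]; simp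

lemma Qsum_pos {μ x : ℝ} (h : 0 ≤ μ * x) {m : ℕ} (hm : 1 ≤ m) : 0 < Qsum μ m x := by
  rw [Qsum_eq]
  apply mul_pos (Real.exp_pos _)
  apply Finset.sum_pos' (fun v _ => by positivity)
  exact ⟨0, Finset.mem_range.mpr hm, by simp⟩

lemma Qsum_mono_shape {μ x : ℝ} (h : 0 ≤ μ * x) (m : ℕ) : Qsum μ m x ≤ Qsum μ (m+1) x := by
  rw [Qsum, Qsum, Finset.sum_range_succ]
  have : 0 ≤ Real.exp (-μ * x) * (μ * x) ^ m / (Nat.factorial m : ℝ) := by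
    have := Real.exp_pos (-μ * x); positivity
  linarith

lemma key_sum (x : ℝ) (m : ℕ) :
    ∑ v ∈ Finset.range (m+1), ((v : ℝ) * x ^ (v-1) - x ^ v) / (Nat.factorial v : ℝ)
      = -x ^ m / (Nat.factorial m : ℝ) := by
  induction m with
  | zero => simp
  | succ n ih =>
    rw [Finset.sum_range_succ, ih]
    have h1 : (Nat.factorial (n+1) : ℝ) = (n+1) * Nat.factorial n := by
      rw [Nat.factorial_succ]; push_cast; ring
    have h2 : (Nat.factorial n : ℝ) ≠ 0 := Nat.cast_ne_zero.mpr (Nat.factorial_ne_zero n)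
    have h3 : ((n:ℝ)+1) ≠ 0 := by positivity
    rw [h1, Nat.add_sub_cancel]
    field_simp
    push_cast
    ring

lemma hasDerivAt_Qsum (μ : ℝ) (m : ℕ) (x : ℝ) :
    HasDerivAt (fun t => Qsum μ (m+1) t)
      (-(μ * Real.exp (-μ * x) * (μ * x) ^ m / (Nat.factorial m : ℝ))) x := by
  have h : ∀ v ∈ Finset.range (m+1), HasDerivAt
      (fun t => Real.exp (-μ * t) * (μ * t) ^ v / (Nat.factorial v : ℝ))
      (μ * Real.exp (-μ * x) * (((v:ℝ) * (μ * x) ^ (v-1) - (μ * x) ^ v) / (Nat.factorial v : ℝ))) x := by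
    intro v _
    have he : HasDerivAt (fun t => Real.exp (-μ * t)) (-μ * Real.exp (-μ * x)) x := by
      have : HasDerivAt (fun t : ℝ => -μ * t) (-μ) x := by
        simpa using (hasDerivAt_id x).const_mul (-μ)
      simpa [mul_comm] using this.exp
    have hp : HasDerivAt (fun t => (μ * t) ^ v) ((v:ℝ) * (μ * x) ^ (v-1) * μ) x := by
      have h0 : HasDerivAt (fun t : ℝ => μ * t) μ x := by
        simpa using (hasDerivAt_id x).const_mul μ
      have := (hasDerivAt_pow v (μ * x)).comp x h0
      exact this
    have := (he.mul hp).div_const (Nat.factorial v : ℝ)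
    refine this.congr_deriv ?_
    field_simp
    ring
  have hsum := HasDerivAt.fun_sum h
  refine hsum.congr_deriv ?_
  rw [← Finset.mul_sum, key_sum]
  field_simp

lemma Qsum_antitone (μ : ℝ) (hμ : 0 < μ) (m : ℕ) :
    AntitoneOn (fun t => Qsum μ (m+1) t) (Set.Ici (0:ℝ)) := by
  apply antitoneOn_of_deriv_nonpos (convex_Ici 0)
  · exact fun t _ => (hasDerivAt_Qsum μ m t).continuousAt.continuousWithinAt
  · intro t _
    exact (hasDerivAt_Qsum μ m t).differentiableAt.differentiableWithinAt
  · intro t ht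
    rw [(hasDerivAt_Qsum μ m t).deriv]
    rw [interior_Ici] at ht
    have ht' : 0 < t := ht
    have : 0 ≤ μ * Real.exp (-μ * t) * (μ * t) ^ m / (Nat.factorial m : ℝ) := by
      have := Real.exp_pos (-μ * t)
      have : 0 ≤ μ * t := by positivity
      positivity
    linarith

lemma erlangCDF_eq (μ : ℝ) (m : ℤ) (x : ℝ) : erlangCDF μ m x = 1 - Qsum μ m.toNat x := by
  unfold erlangCDF Qsum
  split
  · rw [Int.toNat_of_nonpos ‹m ≤ 0›]; simp
  · rfl

lemma erlang_le_one {μ x : ℝ} (h : 0 ≤ μ * x) (m : ℤ) : erlangCDF μ m x ≤ 1 := by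
  rw [erlangCDF_eq]; have := Qsum_nonneg h m.toNat; linarith

lemma erlang_nonneg {μ x : ℝ} (h : 0 ≤ μ * x) (m : ℤ) : 0 ≤ erlangCDF μ m x := by
  rw [erlangCDF_eq]; have := Qsum_le_one h m.toNat; linarith

lemma erlang_pos {μ x : ℝ} (h : 0 < μ * x) (m : ℤ) : 0 < erlangCDF μ m x := by
  rw [erlangCDF_eq]; have := Qsum_lt_one h m.toNat; linarith

lemma erlang_diff_nonneg {μ : ℝ} (hμ : 0 < μ) {s t : ℝ} (ht : 0 < t) (hst : t ≤ s) (a : ℤ) :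
    0 ≤ erlangCDF μ a s - erlangCDF μ (a + 1) t := by
  rw [erlangCDF_eq, erlangCDF_eq]
  have hs : 0 < s := lt_of_lt_of_le ht hst
  rcases le_or_gt a 0 with ha | ha
  · have h1 : a.toNat = 0 := by omega
    rw [h1]
    have hq0 : Qsum μ 0 s = 0 := by simp [Qsum]
    have := Qsum_nonneg (le_of_lt (mul_pos hμ ht)) (a + 1).toNat
    linarith
  · have h1 : (a + 1).toNat = a.toNat + 1 := by omega
    rw [h1]
    have h2 : 1 ≤ a.toNat := by omega
    obtain ⟨k, hk⟩ : ∃ k, a.toNat = k + 1 := ⟨a.toNat - 1, by omega⟩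
    rw [hk]
    have hanti := Qsum_antitone μ hμ (k + 1) (Set.mem_Ici.mpr ht.le)
      (Set.mem_Ici.mpr hs.le) hst
    have hshape := Qsum_mono_shape (le_of_lt (mul_pos hμ hs)) (k + 1)
    simp only at hanti
    linarith

lemma pow_entry_nonneg {B : ℕ} (P : Matrix (Fin B) (Fin B) ℝ)
    (hnn : ∀ a b, 0 ≤ P a b) (n : ℕ) : ∀ a b, 0 ≤ (P ^ n) a b := by
  induction n with
  | zero => intro a b; rw [pow_zero, Matrix.one_apply]; split <;> norm_num
  | succ n ih =>
    intro a b
    rw [pow_succ, Matrix.mul_apply]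
    exact Finset.sum_nonneg fun k _ => mul_nonneg (ih a k) (hnn k b)

lemma chain_prepend {B : ℕ} (P : Matrix (Fin B) (Fin B) ℝ)
    (hnn : ∀ a b, 0 ≤ P a b) {n : ℕ} {a b c : Fin B}
    (h1 : 0 < P a b) (h2 : 0 < (P ^ n) b c) : 0 < (P ^ (n + 1)) a c := by
  have hpnn := pow_entry_nonneg P hnn n
  rw [pow_succ', Matrix.mul_apply]
  have hle : P a b * (P ^ n) b c ≤ ∑ k, P a k * (P ^ n) k c :=
    Finset.single_le_sum (fun k _ => mul_nonneg (hnn a k) (hpnn k c)) (Finset.mem_univ b)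
  have := mul_pos h1 h2
  linarith

/-- for the battery-level DTMC sampled at update instants of a
monotone threshold policy (`B ≥ 2`, Poisson rate `μ > 0`, finite positive
non-increasing thresholds `τ_1 ≥ ... ≥ τ_B > 0`), with transitions
`P(j → B−1) = Pr(Y_{B−j} ≤ τ_{B−1})`,
`P(j → 0) = 1 − Pr(Y_{2−j} ≤ τ_1)`, and
`P(j → i) = Pr(Y_{1+i−j} ≤ τ_i) − Pr(Y_{2+i−j} ≤ τ_{i+1})` for `0 < i < B−1`,
every state `i` is reachable from every state `j` in at most `B−1` steps with
positive probability; hence the finite chain is irreducible (ergodic). -/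
theorem stmt_15 (B : ℕ) (hB : 2 ≤ B) (μ : ℝ) (hμ : 0 < μ) (τ : ℕ → ℝ)
    (hpos : ∀ i, 1 ≤ i → i ≤ B → 0 < τ i)
    (hmono : ∀ i j, 1 ≤ i → i ≤ j → j ≤ B → τ j ≤ τ i)
    (P : Matrix (Fin B) (Fin B) ℝ)
    (hP : ∀ j i : Fin B, P j i =
      if (i : ℕ) = B - 1 then erlangCDF μ ((B : ℤ) - (j : ℕ)) (τ (B - 1))
      else if (i : ℕ) = 0 then 1 - erlangCDF μ (2 - (j : ℕ)) (τ 1)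
      else erlangCDF μ (1 + (i : ℕ) - (j : ℕ)) (τ i)
            - erlangCDF μ (2 + (i : ℕ) - (j : ℕ)) (τ ((i : ℕ) + 1))) :
    ∀ j i : Fin B, ∃ n : ℕ, 1 ≤ n ∧ n ≤ B - 1 ∧ 0 < (P ^ n) j i := by
  have hτ1 : 0 < τ 1 := hpos 1 le_rfl (by omega)
  have hτB : 0 < τ (B - 1) := hpos (B - 1) (by omega) (by omega)
  -- all entries nonnegative
  have hnn : ∀ a b : Fin B, 0 ≤ P a b := by
    intro a b
    rw [hP]
    split
    · exact erlang_nonneg (mul_pos hμ hτB).le _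
    · split
      · have := erlang_le_one (mul_pos hμ hτ1).le (2 - ((a : ℕ) : ℤ)); linarith
      · rename_i hb1 hb0
        have hbB : (b : ℕ) < B := b.isLt
        have hi1 : 1 ≤ (b : ℕ) := Nat.one_le_iff_ne_zero.mpr hb0
        have hi2 : (b : ℕ) + 1 ≤ B := by omega
        have hts : τ ((b : ℕ) + 1) ≤ τ (b : ℕ) := hmono (b : ℕ) ((b : ℕ) + 1) hi1 (by omega) hi2
        have htp : 0 < τ ((b : ℕ) + 1) := hpos ((b : ℕ) + 1) (by omega) hi2
        have key := erlang_diff_nonneg hμ htp hts (1 + ((b : ℕ) : ℤ) - ((a : ℕ) : ℤ))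
        have heq : (1 + ((b : ℕ) : ℤ) - ((a : ℕ) : ℤ)) + 1 = 2 + ((b : ℕ) : ℤ) - ((a : ℕ) : ℤ) := by ring
        rw [heq] at key
        exact key
  -- downward single steps
  have hdown : ∀ a b : Fin B, (b : ℕ) + 1 = (a : ℕ) → 0 < P a b := by
    intro a b hab
    have haB : (a : ℕ) < B := a.isLt
    rw [hP]
    rw [if_neg (by omega : ¬ (b : ℕ) = B - 1)]
    by_cases h0 : (b : ℕ) = 0
    · rw [if_pos h0]
      rw [erlangCDF_eq]
      have h1 : ((2 : ℤ) - ((a : ℕ) : ℤ)).toNat = 1 := by omega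
      rw [h1]
      have := Qsum_pos (mul_pos hμ hτ1).le (le_refl 1)
      linarith
    · rw [if_neg h0]
      rw [erlangCDF_eq, erlangCDF_eq]
      have h1 : ((1 : ℤ) + ((b : ℕ) : ℤ) - ((a : ℕ) : ℤ)).toNat = 0 := by omega
      have h2 : ((2 : ℤ) + ((b : ℕ) : ℤ) - ((a : ℕ) : ℤ)).toNat = 1 := by omega
      rw [h1, h2]
      have hq0 : Qsum μ 0 (τ (b : ℕ)) = 0 := by simp [Qsum]
      have htp : 0 < τ ((b : ℕ) + 1) := hpos ((b : ℕ) + 1) (by omega) (by omega)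
      have := Qsum_pos (mul_pos hμ htp).le (le_refl 1)
      linarith
  -- jump to top state
  have htop : ∀ a b : Fin B, (b : ℕ) = B - 1 → 0 < P a b := by
    intro a b hb
    rw [hP, if_pos hb]
    exact erlang_pos (mul_pos hμ hτB) _
  -- self-loop at 0
  have h00 : ∀ a b : Fin B, (a : ℕ) = 0 → (b : ℕ) = 0 → 0 < P a b := by
    intro a b ha hb
    rw [hP]
    rw [if_neg (by omega : ¬ (b : ℕ) = B - 1), if_pos hb]
    rw [erlangCDF_eq]
    have h1 : ((2 : ℤ) - ((a : ℕ) : ℤ)).toNat = 2 := by omega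
    rw [h1]
    have := Qsum_pos (mul_pos hμ hτ1).le (by omega : 1 ≤ 2)
    linarith
  -- downward chains
  have hchain : ∀ d (a b : Fin B), 1 ≤ d → (b : ℕ) + d = (a : ℕ) → 0 < (P ^ d) a b := by
    intro d
    induction d with
    | zero => intro a b h; omega
    | succ n ih =>
      intro a b _ hab
      by_cases hn : n = 0
      · subst hn
        rw [pow_one]
        exact hdown a b (by omega)
      · have hc : (b : ℕ) + n < B := by have := a.isLt; omega
        have h1 : 0 < P a (⟨(b : ℕ) + n, hc⟩ : Fin B) := hdown a _ (by simp; omega)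
        have h2 : 0 < (P ^ n) (⟨(b : ℕ) + n, hc⟩ : Fin B) b := ih _ b (by omega) (by simp)
        exact chain_prepend P hnn h1 h2
  -- main case analysis
  intro j i
  by_cases hji : (i : ℕ) < (j : ℕ)
  · exact ⟨(j : ℕ) - (i : ℕ), by omega, by have := j.isLt; omega,
      hchain _ j i (by omega) (by omega)⟩
  · by_cases hi : (i : ℕ) = B - 1
    · exact ⟨1, le_rfl, by omega, by rw [pow_one]; exact htop j i hi⟩
    · by_cases hi0 : (i : ℕ) = 0
      · exact ⟨1, le_rfl, by omega, by rw [pow_one]; exact h00 j i (by omega) hi0⟩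
      · have hiB : (i : ℕ) < B := i.isLt
        have hcB : B - 1 < B := by omega
        have h1 : 0 < P j (⟨B - 1, hcB⟩ : Fin B) := htop j _ rfl
        have h2 : 0 < (P ^ (B - 1 - (i : ℕ))) (⟨B - 1, hcB⟩ : Fin B) i :=
          hchain _ _ i (by omega) (by simp; omega)
        exact ⟨B - 1 - (i : ℕ) + 1, by omega, by omega, chain_prepend P hnn h1 h2⟩
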